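/- Let n ≥ 1 and let Z ∈ so(n) be such that I − ZᵀZ is positive definite. Then ‖√(I − ZᵀZ) − I + ½ ZᵀZ‖_F ≤ ½ ‖Z‖_F⁴; equivalently, the normal adjustment C(Z) = √(I − ZᵀZ) − I satisfies ‖C(Z) − ½ S(Z,Z)‖_F ≤ ½ ‖Z‖_F⁴, where S(Z,Z) = Z² = −ZᵀZ is the second fundamental form of SO(n) evaluated at (Z,Z). -/

import Mathlib

open Matrix

/-- The Frobenius norm `‖A‖_F = √(tr (Aᵀ A))` of a real square matrix. -/
noncomputable def frobeniusNorm {n : ℕ} (A : Matrix (Fin n) (Fin n) ℝ) : ℝ :=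
  Real.sqrt ((Aᵀ * A).trace)

open scoped ComplexOrder in
noncomputable def Matrix.PosSemidef.sqrt {n 𝕜 : Type*} [Fintype n] [RCLike 𝕜] [DecidableEq n]
    {A : Matrix n n 𝕜} (hA : A.PosSemidef) : Matrix n n 𝕜 :=
  hA.1.eigenvectorUnitary.1 * diagonal ((↑) ∘ (√·) ∘ hA.1.eigenvalues) *
    (star hA.1.eigenvectorUnitary : Matrix n n 𝕜)

open scoped ComplexOrder in
lemma Matrix.PosSemidef.posSemidef_sqrt {n 𝕜 : Type*} [Fintype n] [RCLike 𝕜] [DecidableEq n]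
    {A : Matrix n n 𝕜} (hA : A.PosSemidef) : hA.sqrt.PosSemidef := by
  unfold Matrix.PosSemidef.sqrt
  rw [Matrix.star_eq_conjTranspose]
  refine Matrix.PosSemidef.mul_mul_conjTranspose_same (Matrix.PosSemidef.diagonal ?_) _
  intro i
  simp only [Pi.zero_apply, Function.comp_apply]
  exact_mod_cast Real.sqrt_nonneg _

open scoped ComplexOrder in
lemma Matrix.PosSemidef.sqrt_mul_self {n 𝕜 : Type*} [Fintype n] [RCLike 𝕜] [DecidableEq n]
    {A : Matrix n n 𝕜} (hA : A.PosSemidef) : hA.sqrt * hA.sqrt = A := by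
  unfold Matrix.PosSemidef.sqrt
  have hU : (star hA.1.eigenvectorUnitary : Matrix n n 𝕜) * hA.1.eigenvectorUnitary.1 = 1 :=
    Unitary.coe_star_mul_self _
  have hD : diagonal ((↑) ∘ (√·) ∘ hA.1.eigenvalues) * diagonal ((↑) ∘ (√·) ∘ hA.1.eigenvalues)
      = diagonal (RCLike.ofReal ∘ hA.1.eigenvalues : n → 𝕜) := by
    rw [diagonal_mul_diagonal]
    congr 1; ext i
    simp only [Function.comp_apply]
    rw [← RCLike.ofReal_mul, Real.mul_self_sqrt (hA.eigenvalues_nonneg i)]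
  calc _ = hA.1.eigenvectorUnitary.1 * (diagonal ((↑) ∘ (√·) ∘ hA.1.eigenvalues) *
      ((star hA.1.eigenvectorUnitary : Matrix n n 𝕜) * hA.1.eigenvectorUnitary.1) *
      diagonal ((↑) ∘ (√·) ∘ hA.1.eigenvalues)) * (star hA.1.eigenvectorUnitary : Matrix n n 𝕜) := by
        simp only [Matrix.mul_assoc]
    _ = A := by
      rw [hU, Matrix.mul_one, hD]
      conv_rhs => rw [hA.1.spectral_theorem]
      simp [Unitary.conjStarAlgAut_apply]

attribute [local instance] Matrix.frobeniusSeminormedAddCommGroup Matrix.frobeniusNormedSpace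

lemma frob_trace_eq {n : ℕ} (A : Matrix (Fin n) (Fin n) ℝ) :
    (Aᵀ * A).trace = ‖A‖ ^ 2 := by
  rw [Matrix.frobenius_norm_def, ← Real.rpow_natCast _ 2, ← Real.rpow_mul (by positivity)]
  norm_num
  simp only [Matrix.trace, Matrix.diag, Matrix.mul_apply, Matrix.transpose_apply,
    Real.norm_eq_abs]
  rw [Finset.sum_comm]
  congr 1; ext i; congr 1; ext j
  ring

lemma frob_eq {n : ℕ} (A : Matrix (Fin n) (Fin n) ℝ) : frobeniusNorm A = ‖A‖ := by
  rw [frobeniusNorm, frob_trace_eq, Real.sqrt_sq (norm_nonneg A)]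

lemma trace_nonneg' {n : ℕ} {M : Matrix (Fin n) (Fin n) ℝ} (hM : M.PosSemidef) :
    0 ≤ M.trace := by
  exact hM.trace_nonneg

/-- For skew-symmetric `Z` with `I - ZᵀZ` positive definite, the
normal adjustment `C(Z) = √(I - ZᵀZ) - I` satisfies
`‖C(Z) - ½ S(Z,Z)‖_F = ‖√(I - ZᵀZ) - I + ½ ZᵀZ‖_F ≤ ½ ‖Z‖_F⁴`. -/
theorem stmt2 {n : ℕ} (hn : 1 ≤ n) (Z : Matrix (Fin n) (Fin n) ℝ)
    (hZ : Zᵀ = -Z) (hpd : (1 - Zᵀ * Z).PosDef) :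
    frobeniusNorm (hpd.posSemidef.sqrt - 1 + (1 / 2 : ℝ) • (Zᵀ * Z))
      ≤ (1 / 2 : ℝ) * (frobeniusNorm Z) ^ 4 := by
  set A : Matrix (Fin n) (Fin n) ℝ := Zᵀ * Z with hAdef
  have hA : A.PosSemidef := by
    rw [hAdef, ← Matrix.conjTranspose_eq_transpose_of_trivial]
    exact Matrix.posSemidef_conjTranspose_mul_self Z
  set S : Matrix (Fin n) (Fin n) ℝ := hpd.posSemidef.sqrt with hSdef
  have hS : S.PosSemidef := hpd.posSemidef.posSemidef_sqrt
  have hSsym : Sᵀ = S := by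
    rw [← Matrix.conjTranspose_eq_transpose_of_trivial]; exact hS.1
  have hSS : S * S = 1 - A := hpd.posSemidef.sqrt_mul_self
  set P : Matrix (Fin n) (Fin n) ℝ := 1 - S with hPdef
  have hPsym : Pᵀ = P := by
    rw [hPdef, Matrix.transpose_sub, Matrix.transpose_one, hSsym]
  have hAsym : Aᵀ = A := by
    rw [hAdef, Matrix.transpose_mul, Matrix.transpose_transpose]
  -- rewrite the matrix inside the norm
  have hE : S - 1 + (1 / 2 : ℝ) • A = -((1 / 2 : ℝ) • (P * P)) := by
    have h1 : P * P = 1 - S - S + S * S := by rw [hPdef]; noncomm_ring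
    rw [h1, hSS]; module
  rw [hE, frob_eq, frob_eq, norm_neg, norm_smul]
  simp only [Real.norm_eq_abs]
  rw [abs_of_nonneg (by norm_num : (0:ℝ) ≤ (1/2:ℝ))]
  have hZnn : (0:ℝ) ≤ ‖Z‖ := norm_nonneg _
  refine mul_le_mul_of_nonneg_left ?_ (by norm_num)
  -- now: ‖P * P‖ ≤ ‖Z‖ ^ 4
  -- step 1 : tr(P⁴) ≤ tr(A⁴)
  set Q : Matrix (Fin n) (Fin n) ℝ :=
    S + S + S + S + (S*S + S*S + S*S + S*S + S*S + S*S) + (S*S*S + S*S*S + S*S*S + S*S*S)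
      + S*S*S*S with hQdef
  have hQ : Q.PosSemidef := by
    have h2 : (S*S).PosSemidef := by simpa [pow_succ, pow_zero, one_mul] using hS.pow 2
    have h3 : (S*S*S).PosSemidef := by
      have := hS.pow 3; simpa [pow_succ, pow_zero, one_mul, mul_assoc] using this
    have h4 : (S*S*S*S).PosSemidef := by
      have := hS.pow 4; simpa [pow_succ, pow_zero, one_mul, mul_assoc] using this
    exact ((((hS.add hS).add hS).add hS).add
      (((((h2.add h2).add h2).add h2).add h2).add h2)).add
      ((((h3.add h3).add h3).add h3)) |>.add h4
  have key : (A*A)*(A*A) = (P*P)*(P*P) + (P*P) * Q * (P*P) := by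
    have hA' : A = 1 - S * S := by rw [hSS, sub_sub_cancel]
    rw [hA', hPdef, hQdef]; noncomm_ring
  have hconj : ((P*P) * Q * (P*P)).PosSemidef := by
    have := hQ.conjTranspose_mul_mul_same (P*P)
    simpa [Matrix.conjTranspose_eq_transpose_of_trivial, Matrix.transpose_mul, hPsym] using this
  have htr : ((P*P)ᵀ*(P*P)).trace ≤ ((A*A)ᵀ*(A*A)).trace := by
    rw [Matrix.transpose_mul, hPsym, Matrix.transpose_mul, hAsym]
    have : ((A*A)*(A*A)).trace = ((P*P)*(P*P)).trace + ((P*P) * Q * (P*P)).trace := by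
      rw [key, Matrix.trace_add]
    rw [this]
    linarith [trace_nonneg' hconj]
  -- step 2 : tr(A⁴) ≤ ‖Z‖⁸
  have hAZ : ‖A‖ ≤ ‖Z‖ ^ 2 := by
    calc ‖A‖ = ‖Zᵀ * Z‖ := by rw [hAdef]
    _ ≤ ‖Zᵀ‖ * ‖Z‖ := Matrix.frobenius_norm_mul _ _
    _ = ‖Z‖ ^ 2 := by rw [Matrix.frobenius_norm_transpose]; ring
  have hAA : ‖A * A‖ ≤ ‖Z‖ ^ 4 := by
    calc ‖A * A‖ ≤ ‖A‖ * ‖A‖ := Matrix.frobenius_norm_mul _ _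
    _ ≤ (‖Z‖^2) * (‖Z‖^2) := by
        exact mul_le_mul hAZ hAZ (norm_nonneg _) (by positivity)
    _ = ‖Z‖ ^ 4 := by ring
  have h1 : ‖P * P‖ ^ 2 ≤ (‖Z‖ ^ 4) ^ 2 := by
    calc ‖P * P‖ ^ 2 = ((P*P)ᵀ*(P*P)).trace := (frob_trace_eq _).symm
    _ ≤ ((A*A)ᵀ*(A*A)).trace := htr
    _ = ‖A * A‖ ^ 2 := frob_trace_eq _
    _ ≤ (‖Z‖ ^ 4) ^ 2 := by
        exact pow_le_pow_left₀ (norm_nonneg _) hAA 2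
  exact (pow_le_pow_iff_left₀ (norm_nonneg _) (by positivity) (by norm_num)).mp h1
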